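/- Consider the fractional housing market with agents N = {1,2,3}, houses H = {a,b,c}, endowments e(1) = (0, 99/100, 1/100), e(2) = (99/100, 0, 1/100), e(3) = (1/100, 1/100, 98/100) (coordinates in order a, b, c), and strict preferences: agent 1: a ≻ c ≻ b; agent 2: b ≻ a ≻ c; agent 3: b ≻ a ≻ c. The assignment x with x(1) = (101/200, 0, 97/200), x(2) = (49/100, 1/2, 1/100), x(3) = (1/20, 1/2, 99/200) (the output of the Controlled Consuming algorithm on this market) is not SD-core stable: the coalition S = {1,2} with y(1) = (99/100, 0, 1/100), y(2) = (0, 99/100, 1/100) satisfies y(1) + y(2) = e(1) + e(2), y(1) ≻_1^SD x(1), and y(2) ≻_2^SD x(2). -/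

import Mathlib

open Finset
open scoped Classical

variable {N H : Type*}

noncomputable section

/-- The total weight that allocation `p` puts on houses weakly preferred to `h`
(with respect to the preference relation `R`, where `R a b` means `a ≿ b`). -/
def upperSum [Fintype H] (R : H → H → Prop) (p : H → ℝ) (h : H) : ℝ :=
  ∑ h' ∈ Finset.univ.filter (fun h' => R h' h), p h'

/-- `p ≿^SD q` (stochastic dominance). -/
def SDge [Fintype H] (R : H → H → Prop) (p q : H → ℝ) : Prop :=
  ∀ h, upperSum R q h ≤ upperSum R p h

/-- `p ≻^SD q`. -/
def SDgt [Fintype H] (R : H → H → Prop) (p q : H → ℝ) : Prop :=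
  SDge R p q ∧ ¬ SDge R q p

/-- Total weight that `p` puts on the indifference class of `h`. -/
def classSum [Fintype H] (R : H → H → Prop) (p : H → ℝ) (h : H) : ℝ :=
  ∑ h' ∈ Finset.univ.filter (fun h' => R h' h ∧ R h h'), p h'

/-- `p ~^DL q`: all indifference-class sums agree. -/
def DLsim [Fintype H] (R : H → H → Prop) (p q : H → ℝ) : Prop :=
  ∀ h, classSum R p h = classSum R q h

/-- `p ≻^DL q`: there is an indifference class (represented by a house `h`) on which
`p` puts strictly more weight, while all strictly more preferred classes have equal sums. -/
def DLgt [Fintype H] (R : H → H → Prop) (p q : H → ℝ) : Prop :=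
  ∃ h, classSum R q h < classSum R p h ∧
    ∀ h', R h' h ∧ ¬ R h h' → classSum R p h' = classSum R q h'

/-- `p ≿^DL q`. -/
def DLge [Fintype H] (R : H → H → Prop) (p q : H → ℝ) : Prop :=
  DLgt R p q ∨ DLsim R p q

/-- An allocation is a nonnegative function on houses. -/
def IsAlloc (p : H → ℝ) : Prop := ∀ h, 0 ≤ p h

/-- A preference is a total preorder (total and transitive relation). -/
def TotalPreorderRel (R : H → H → Prop) : Prop := Total R ∧ Transitive R

/-- An assignment with respect to endowments `e`. -/
def IsAssignment [Fintype N] (e x : N → H → ℝ) : Prop :=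
  (∀ i, IsAlloc (x i)) ∧ ∀ h, ∑ i, x i h = ∑ i, e i h

/-- SD-efficiency. -/
def SDEfficient [Fintype N] [Fintype H] (R : N → H → H → Prop) (e x : N → H → ℝ) : Prop :=
  ¬ ∃ y, IsAssignment e y ∧ (∀ i, SDge (R i) (y i) (x i)) ∧ ∃ i, SDgt (R i) (y i) (x i)

/-- SD individual rationality. -/
def SDIR [Fintype H] (R : N → H → H → Prop) (e x : N → H → ℝ) : Prop :=
  ∀ i, SDge (R i) (x i) (e i)

/-- SD core stability. -/
def SDCoreStable [Fintype N] [Fintype H] (R : N → H → H → Prop) (e x : N → H → ℝ) : Prop :=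
  ¬ ∃ (S : Finset N) (y : N → H → ℝ), S.Nonempty ∧ (∀ i ∈ S, IsAlloc (y i)) ∧
      (∀ h, ∑ i ∈ S, y i h = ∑ i ∈ S, e i h) ∧ ∀ i ∈ S, SDgt (R i) (y i) (x i)

/-- SD strict core membership. -/
def SDStrictCore [Fintype N] [Fintype H] (R : N → H → H → Prop) (e x : N → H → ℝ) : Prop :=
  ¬ ∃ (S : Finset N) (y : N → H → ℝ), S.Nonempty ∧ (∀ i ∈ S, IsAlloc (y i)) ∧
      (∀ h, ∑ i ∈ S, y i h = ∑ i ∈ S, e i h) ∧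
      (∀ i ∈ S, SDge (R i) (y i) (x i)) ∧ ∃ i ∈ S, SDgt (R i) (y i) (x i)

/-- The allocation consisting of exactly one unit of house `h`. -/
def delta [DecidableEq H] (h : H) : H → ℝ := fun h' => if h' = h then 1 else 0

end

/-- Endowments (houses a, b, c encoded as 0, 1, 2). -/
noncomputable def e10 : Fin 3 → Fin 3 → ℝ :=
  ![![0, 99/100, 1/100], ![99/100, 0, 1/100], ![1/100, 1/100, 98/100]]

/-- Ranks (0 = best): agent 1 has a ≻ c ≻ b; agents 2 and 3 have b ≻ a ≻ c. -/
def rank10 : Fin 3 → Fin 3 → ℕ := ![![0, 2, 1], ![1, 0, 2], ![1, 0, 2]]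

/-- The preference profile. -/
def R10 (i : Fin 3) (h h' : Fin 3) : Prop := rank10 i h ≤ rank10 i h'

/-- The outcome of the Controlled Consuming algorithm on this market. -/
noncomputable def x10 : Fin 3 → Fin 3 → ℝ :=
  ![![101/200, 0, 97/200], ![49/100, 1/2, 1/100], ![1/20, 1/2, 99/200]]

/-- The deviation of agent 1 in the blocking coalition {1, 2}. -/
noncomputable def y10₁ : Fin 3 → ℝ := ![99/100, 0, 1/100]

/-- The deviation of agent 2 in the blocking coalition {1, 2}. -/
noncomputable def y10₂ : Fin 3 → ℝ := ![0, 99/100, 1/100]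

/-- the CC outcome `x10` is not SD-core stable; the coalition {1, 2}
blocks it via `y10₁, y10₂`. -/
theorem cc_not_sd_core_stable :
    (∀ h, y10₁ h + y10₂ h = e10 0 h + e10 1 h) ∧
    SDgt (R10 0) y10₁ (x10 0) ∧ SDgt (R10 1) y10₂ (x10 1) ∧
    ¬ SDCoreStable R10 e10 x10 := by
  have h1 : ∀ h, y10₁ h + y10₂ h = e10 0 h + e10 1 h := by
    intro h; fin_cases h <;> simp [y10₁, y10₂, e10]
  have g1 : SDgt (R10 0) y10₁ (x10 0) := by
    constructor
    · intro h; fin_cases h <;>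
        simp [upperSum, Finset.sum_filter, Fin.sum_univ_three, R10, rank10, y10₁, x10,
          Matrix.cons_val_zero, Matrix.cons_val_one, decide_true, decide_false] <;> norm_num
    · intro hc
      have := hc 0
      simp [upperSum, Finset.sum_filter, Fin.sum_univ_three, R10, rank10, y10₁, x10] at this
      norm_num at this
  have g2 : SDgt (R10 1) y10₂ (x10 1) := by
    constructor
    · intro h; fin_cases h <;>
        simp [upperSum, Finset.sum_filter, Fin.sum_univ_three, R10, rank10, y10₂, x10] <;> norm_num
    · intro hc
      have := hc 1
      simp [upperSum, Finset.sum_filter, Fin.sum_univ_three, R10, rank10, y10₂, x10] at this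
      norm_num at this
  refine ⟨h1, g1, g2, ?_⟩
  intro hstable
  apply hstable
  refine ⟨{0, 1}, ![y10₁, y10₂, 0], ⟨0, by simp⟩, ?_, ?_, ?_⟩
  · intro i hi
    fin_cases hi <;> intro h <;> fin_cases h <;> simp [y10₁, y10₂] <;> norm_num
  · intro h
    have := h1 h
    simp [Finset.sum_insert, Finset.sum_singleton]
    linarith
  · intro i hi
    fin_cases hi
    · exact g1
    · exact g2
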